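/- arXiv:1703.10044 — 3 statements merged into one kernel-verified Lean document; each statement's English description precedes it below -/
import Mathlib

section
/- Every modulus of continuity μ : ℕ → ℕ of the function f : [0,1] → ℝ, f(x) = Σ_{i=0}^∞ 2^(−i) · max{1 − |2^(2i+2)·x − 3|, 0}, satisfies μ(i+1) ≥ 2i+1 for every i ∈ ℕ; in particular, f admits no modulus of continuity bounded by m ↦ 2m − 2. -/
theorem stmt_7
    (f : ℝ → ℝ)
    (hf : ∀ x, f x = ∑' i : ℕ, (2:ℝ)^(-(i:ℤ)) * max (1 - |(2:ℝ)^(2*i+2) * x - 3|) 0)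
    (μ : ℕ → ℕ)
    (hμ : ∀ x ∈ Set.Icc (0:ℝ) 1, ∀ y ∈ Set.Icc (0:ℝ) 1, ∀ n : ℕ,
      |x - y| ≤ (2:ℝ)^(-(μ n : ℤ)) → |f x - f y| ≤ (2:ℝ)^(-(n:ℤ))) :
    (∀ i : ℕ, μ (i+1) ≥ 2*i+1) ∧ ¬ (∀ n : ℕ, μ n ≤ 2*n - 2) := by
  have hf0 : f 0 = 0 := by
    rw [hf]
    have : ∀ j : ℕ, (2:ℝ)^(-(j:ℤ)) * max (1 - |(2:ℝ)^(2*j+2) * 0 - 3|) 0 = 0 := by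
      intro j
      have : |(2:ℝ)^(2*j+2) * 0 - 3| = 3 := by norm_num
      rw [this]
      norm_num
    simp only [this, tsum_zero]
  have hfx : ∀ i : ℕ, f (3 * (2:ℝ)^(-(2*(i:ℤ)+2))) = (2:ℝ)^(-(i:ℤ)) := by
    intro i
    rw [hf]
    have key : ∀ j : ℕ, (2:ℝ)^(2*j+2) * (3 * (2:ℝ)^(-(2*(i:ℤ)+2))) = 3 * (2:ℝ)^(2*(j:ℤ)-2*(i:ℤ)) := by
      intro j
      rw [← zpow_natCast (2:ℝ) (2*j+2)]
      rw [show ((2*j+2 : ℕ) : ℤ) = 2*(j:ℤ)+2 by push_cast; ring]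
      rw [mul_comm (3:ℝ), ← mul_assoc, ← zpow_add₀ (by norm_num : (2:ℝ) ≠ 0)]
      ring_nf
    rw [tsum_eq_single i]
    · rw [key i]
      norm_num
    · intro j hj
      rw [key j]
      rcases lt_or_gt_of_ne hj with h | h
      · -- j < i : 3 * 2^(2j-2i) ≤ 3/4
        have h1 : (2:ℝ)^(2*(j:ℤ)-2*(i:ℤ)) ≤ (2:ℝ)^(-2:ℤ) := by
          apply zpow_le_zpow_right₀ (by norm_num)
          omega
        have h2 : (3:ℝ) * (2:ℝ)^(2*(j:ℤ)-2*(i:ℤ)) ≤ 3/4 := by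
          rw [show ((2:ℝ)^(-2:ℤ)) = 1/4 by norm_num] at h1
          linarith
        have h3 : (0:ℝ) < (2:ℝ)^(2*(j:ℤ)-2*(i:ℤ)) := by positivity
        have habs : |3 * (2:ℝ)^(2*(j:ℤ)-2*(i:ℤ)) - 3| ≥ 9/4 := by
          rw [abs_sub_comm, abs_of_nonneg (by linarith)]
          linarith
        have : max (1 - |3 * (2:ℝ)^(2*(j:ℤ)-2*(i:ℤ)) - 3|) 0 = 0 :=
          max_eq_right (by linarith)
        rw [this, mul_zero]
      · -- j > i : 2^(2j-2i) ≥ 4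
        have h1 : (2:ℝ)^(2:ℤ) ≤ (2:ℝ)^(2*(j:ℤ)-2*(i:ℤ)) := by
          apply zpow_le_zpow_right₀ (by norm_num)
          omega
        have h2 : (3:ℝ) * (2:ℝ)^(2*(j:ℤ)-2*(i:ℤ)) ≥ 12 := by
          rw [show ((2:ℝ)^(2:ℤ)) = 4 by norm_num] at h1
          linarith
        have habs : |3 * (2:ℝ)^(2*(j:ℤ)-2*(i:ℤ)) - 3| ≥ 9 := by
          rw [abs_of_nonneg (by linarith)]
          linarith
        have : max (1 - |3 * (2:ℝ)^(2*(j:ℤ)-2*(i:ℤ)) - 3|) 0 = 0 :=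
          max_eq_right (by linarith)
        rw [this, mul_zero]
  have main : ∀ i : ℕ, μ (i+1) ≥ 2*i+1 := by
    intro i
    by_contra hcon
    push_neg at hcon
    have hμle : (μ (i+1) : ℤ) ≤ 2*i := by exact_mod_cast Nat.lt_succ_iff.mp hcon
    set x : ℝ := 3 * (2:ℝ)^(-(2*(i:ℤ)+2)) with hxdef
    have hxpos : (0:ℝ) < x := by positivity
    have hxle1 : x ≤ 1 := by
      have h1 : (2:ℝ)^(-(2*(i:ℤ)+2)) ≤ (2:ℝ)^(-2:ℤ) := by
        apply zpow_le_zpow_right₀ (by norm_num)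
        omega
      rw [show ((2:ℝ)^(-2:ℤ)) = 1/4 by norm_num] at h1
      rw [hxdef]; linarith
    have hdist : |(0:ℝ) - x| ≤ (2:ℝ)^(-(μ (i+1) : ℤ)) := by
      rw [zero_sub, abs_neg, abs_of_pos hxpos]
      have h1 : x ≤ (2:ℝ)^(-(2*(i:ℤ))) := by
        have : (3:ℝ) * (2:ℝ)^(-(2*(i:ℤ)+2)) ≤ 4 * (2:ℝ)^(-(2*(i:ℤ)+2)) := by
          have : (0:ℝ) < (2:ℝ)^(-(2*(i:ℤ)+2)) := by positivity
          linarith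
        rw [hxdef]
        refine this.trans (le_of_eq ?_)
        rw [show (4:ℝ) = (2:ℝ)^(2:ℤ) by norm_num,
          ← zpow_add₀ (by norm_num : (2:ℝ) ≠ 0)]
        ring_nf
      have h2 : (2:ℝ)^(-(2*(i:ℤ))) ≤ (2:ℝ)^(-(μ (i+1) : ℤ)) := by
        apply zpow_le_zpow_right₀ (by norm_num)
        omega
      exact h1.trans h2
    have := hμ 0 (by constructor <;> norm_num) x ⟨le_of_lt hxpos, hxle1⟩ (i+1) hdist
    rw [hf0, hfx i] at this
    rw [zero_sub, abs_neg, abs_of_pos (by positivity)] at this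
    have hlt : (2:ℝ)^(-((i+1 : ℕ):ℤ)) < (2:ℝ)^(-(i:ℤ)) := by
      apply zpow_lt_zpow_right₀ (by norm_num)
      push_cast; omega
    linarith
  refine ⟨main, fun h => ?_⟩
  have h1 := main 0
  have h2 := h 1
  norm_num at h1 h2
  omega
end

section
/- The function f : [0,1] → ℝ defined by f(x) = Σ_{i=0}^∞ 2^(−i) · max{1 − |2^(2i+2)·x − 3|, 0} is Hölder continuous with exponent 1/2: there exists a constant C > 0 such that for all x, y ∈ [0,1], |f(x) − f(y)| ≤ C · |x − y|^(1/2). -/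
open Finset

private noncomputable def stmt8g (i : ℕ) (x : ℝ) : ℝ :=
  (2:ℝ)^(-(i:ℤ)) * max (1 - |(2:ℝ)^(2*i+2) * x - 3|) 0

private lemma stmt8_max_mem (z : ℝ) : 0 ≤ max (1 - |z|) 0 ∧ max (1 - |z|) 0 ≤ 1 :=
  ⟨le_max_right _ _, max_le (by linarith [abs_nonneg z]) zero_le_one⟩

private lemma stmt8g_bound (i : ℕ) (x y : ℝ) : |stmt8g i x - stmt8g i y| ≤ (2:ℝ)^(-(i:ℤ)) := by
  unfold stmt8g
  rw [← mul_sub, abs_mul, abs_of_pos (by positivity : (0:ℝ) < (2:ℝ)^(-(i:ℤ)))]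
  obtain ⟨h1a, h1b⟩ := stmt8_max_mem ((2:ℝ)^(2*i+2) * x - 3)
  obtain ⟨h2a, h2b⟩ := stmt8_max_mem ((2:ℝ)^(2*i+2) * y - 3)
  have hm : |max (1 - |(2:ℝ)^(2*i+2) * x - 3|) 0 - max (1 - |(2:ℝ)^(2*i+2) * y - 3|) 0| ≤ 1 :=
    abs_sub_le_iff.mpr ⟨by linarith, by linarith⟩
  calc (2:ℝ)^(-(i:ℤ)) * |max (1 - |(2:ℝ)^(2*i+2) * x - 3|) 0 - max (1 - |(2:ℝ)^(2*i+2) * y - 3|) 0|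
      ≤ (2:ℝ)^(-(i:ℤ)) * 1 := mul_le_mul_of_nonneg_left hm (by positivity)
    _ = (2:ℝ)^(-(i:ℤ)) := mul_one _

private lemma stmt8g_lip (i : ℕ) (x y : ℝ) :
    |stmt8g i x - stmt8g i y| ≤ (2:ℝ)^(i+2) * |x - y| := by
  unfold stmt8g
  rw [← mul_sub, abs_mul, abs_of_pos (by positivity : (0:ℝ) < (2:ℝ)^(-(i:ℤ)))]
  set a := (2:ℝ)^(2*i+2) * x - 3
  set b := (2:ℝ)^(2*i+2) * y - 3
  have hmax : |max (1 - |a|) 0 - max (1 - |b|) 0| ≤ |a - b| := by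
    refine (abs_max_sub_max_le_abs (1 - |a|) (1 - |b|) 0).trans ?_
    have h : (1 - |a|) - (1 - |b|) = -(|a| - |b|) := by ring
    rw [h, abs_neg]
    exact abs_abs_sub_abs_le_abs_sub a b
  have hab : |a - b| = (2:ℝ)^(2*i+2) * |x - y| := by
    have : a - b = (2:ℝ)^(2*i+2) * (x - y) := by ring
    rw [this, abs_mul, abs_of_pos (by positivity : (0:ℝ) < (2:ℝ)^(2*i+2))]
  have hpow : (2:ℝ)^(-(i:ℤ)) * (2:ℝ)^(2*i+2) = (2:ℝ)^(i+2) := by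
    rw [← zpow_natCast (2:ℝ) (2*i+2), ← zpow_natCast (2:ℝ) (i+2),
      ← zpow_add₀ (two_ne_zero)]
    congr 1; push_cast; ring
  calc (2:ℝ)^(-(i:ℤ)) * |max (1 - |a|) 0 - max (1 - |b|) 0|
      ≤ (2:ℝ)^(-(i:ℤ)) * ((2:ℝ)^(2*i+2) * |x - y|) := by
        rw [← hab]; exact mul_le_mul_of_nonneg_left hmax (by positivity)
    _ = (2:ℝ)^(i+2) * |x - y| := by rw [← mul_assoc, hpow]

private lemma stmt8_zpow_eq (i : ℕ) : (2:ℝ)^(-(i:ℤ)) = (1/2:ℝ)^i := by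
  rw [zpow_neg, zpow_natCast, ← inv_pow, one_div]

private lemma stmt8_summable (x : ℝ) : Summable (fun i => stmt8g i x) := by
  apply Summable.of_nonneg_of_le (fun i => ?_) (fun i => ?_)
    ((summable_geometric_of_lt_one (by norm_num) (by norm_num : (1/2:ℝ) < 1)))
  · exact mul_nonneg (by positivity) (stmt8_max_mem _).1
  · rw [← stmt8_zpow_eq]
    calc stmt8g i x ≤ (2:ℝ)^(-(i:ℤ)) * 1 :=
          mul_le_mul_of_nonneg_left (stmt8_max_mem _).2 (by positivity)
      _ = (2:ℝ)^(-(i:ℤ)) := mul_one _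

theorem stmt_8
    (f : ℝ → ℝ)
    (hf : ∀ x, f x = ∑' i : ℕ, (2:ℝ)^(-(i:ℤ)) * max (1 - |(2:ℝ)^(2*i+2) * x - 3|) 0) :
    ∃ C : ℝ, 0 < C ∧ ∀ x ∈ Set.Icc (0:ℝ) 1, ∀ y ∈ Set.Icc (0:ℝ) 1,
      |f x - f y| ≤ C * |x - y| ^ ((1:ℝ)/2) := by
  refine ⟨18, by norm_num, fun x hx y hy => ?_⟩
  rcases eq_or_ne x y with rfl | hxy
  · simp
  set d := |x - y| with hd
  have hd0 : 0 < d := abs_pos.mpr (sub_ne_zero.mpr hxy)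
  have hd1 : d ≤ 1 := by
    rw [hd, abs_sub_le_iff]
    constructor <;> [skip; skip] <;>
      · rcases hx with ⟨hx0, hx1⟩; rcases hy with ⟨hy0, hy1⟩; linarith
  set s := Real.sqrt d with hs
  have hs0 : 0 < s := Real.sqrt_pos.mpr hd0
  have hs1 : s ≤ 1 := by
    rw [hs, show (1:ℝ) = Real.sqrt 1 by simp]
    exact Real.sqrt_le_sqrt hd1
  have hds : d = s^2 := (Real.sq_sqrt hd0.le).symm
  -- choose n with 2^n ≤ s < 2^(n+1)
  obtain ⟨n, hn1, hn2⟩ := exists_mem_Ico_zpow hs0 (by norm_num : (1:ℝ) < 2)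
  have hn0 : n ≤ 0 := by
    by_contra h
    push_neg at h
    have : (1:ℝ) < 2^n := one_lt_zpow₀ (by norm_num : (1:ℝ) < 2) (by omega)
    linarith
  set N : ℕ := (-n).toNat with hN
  have hNn : (N:ℤ) = -n := Int.toNat_of_nonneg (by omega)
  set t : ℝ := (2:ℝ)^(-(N:ℤ)) with ht
  have ht0 : 0 < t := by positivity
  have htn : t = (2:ℝ)^n := by rw [ht, hNn, neg_neg]
  have hts : t ≤ s := by rw [htn]; exact hn1
  have hst : s < 2*t := by
    rw [htn]
    calc s < (2:ℝ)^(n+1) := hn2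
      _ = 2 * 2^n := by rw [zpow_add₀ (two_ne_zero), zpow_one]; ring
  -- key inequality chain
  have hgx := stmt8_summable x
  have hgy := stmt8_summable y
  have hdiff : Summable (fun i => stmt8g i x - stmt8g i y) := hgx.sub hgy
  have habs : Summable (fun i => |stmt8g i x - stmt8g i y|) := hdiff.abs
  have key : |f x - f y| ≤ ∑' i, |stmt8g i x - stmt8g i y| := by
    rw [hf x, hf y]
    have : (∑' i : ℕ, stmt8g i x) - (∑' i : ℕ, stmt8g i y)
        = ∑' i : ℕ, (stmt8g i x - stmt8g i y) := (Summable.tsum_sub hgx hgy).symm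
    rw [show (∑' i : ℕ, (2:ℝ)^(-(i:ℤ)) * max (1 - |(2:ℝ)^(2*i+2) * x - 3|) 0)
        = ∑' i : ℕ, stmt8g i x from rfl,
      show (∑' i : ℕ, (2:ℝ)^(-(i:ℤ)) * max (1 - |(2:ℝ)^(2*i+2) * y - 3|) 0)
        = ∑' i : ℕ, stmt8g i y from rfl, this]
    simpa [Real.norm_eq_abs] using
      norm_tsum_le_tsum_norm (f := fun i => stmt8g i x - stmt8g i y)
        (by simpa [Real.norm_eq_abs] using habs)
  have hsplit := Summable.sum_add_tsum_nat_add (f := fun i => |stmt8g i x - stmt8g i y|) N habs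
  -- head bound
  have hhead : ∑ i ∈ Finset.range N, |stmt8g i x - stmt8g i y| ≤ 4 * d * t⁻¹ := by
    calc ∑ i ∈ Finset.range N, |stmt8g i x - stmt8g i y|
        ≤ ∑ i ∈ Finset.range N, (2:ℝ)^(i+2) * d :=
          Finset.sum_le_sum (fun i _ => stmt8g_lip i x y)
      _ = (4*d) * ∑ i ∈ Finset.range N, (2:ℝ)^i := by
          rw [Finset.mul_sum]; congr 1; ext i; rw [pow_add]; ring
      _ = (4*d) * ((2^N - 1)/(2-1)) := by rw [geom_sum_eq (by norm_num) N]
      _ ≤ (4*d) * 2^N := by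
          have : ((2:ℝ)^N - 1)/(2-1) ≤ 2^N := by
            rw [show (2:ℝ)-1 = 1 by norm_num, div_one]; linarith
          exact mul_le_mul_of_nonneg_left this (by positivity)
      _ = 4 * d * t⁻¹ := by
          rw [ht, zpow_neg, inv_inv, zpow_natCast]
  -- tail bound
  have htail : ∑' i : ℕ, |stmt8g (i+N) x - stmt8g (i+N) y| ≤ 2 * t := by
    have hrw : ∀ i : ℕ, (2:ℝ)^(-((i+N:ℕ):ℤ)) = t * (1/2:ℝ)^i := by
      intro i
      rw [ht, stmt8_zpow_eq, stmt8_zpow_eq, pow_add, mul_comm]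
    have hsummable : Summable (fun i : ℕ => (2:ℝ)^(-((i+N:ℕ):ℤ))) := by
      simp_rw [hrw]
      exact (summable_geometric_of_lt_one (by norm_num) (by norm_num : (1/2:ℝ) < 1)).mul_left t
    calc ∑' i : ℕ, |stmt8g (i+N) x - stmt8g (i+N) y|
        ≤ ∑' i : ℕ, (2:ℝ)^(-((i+N:ℕ):ℤ)) :=
          Summable.tsum_le_tsum (fun i => stmt8g_bound (i+N) x y)
            (by exact habs.comp_injective (add_left_injective N)) hsummable
      _ = t * ∑' i : ℕ, (1/2:ℝ)^i := by rw [← tsum_mul_left]; exact tsum_congr hrw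
      _ = t * 2 := by
          rw [tsum_geometric_of_lt_one (by norm_num) (by norm_num : (1/2:ℝ) < 1)]
          norm_num
      _ = 2 * t := by ring
  -- combine
  have hbound : |f x - f y| ≤ 4 * d * t⁻¹ + 2 * t := by
    calc |f x - f y| ≤ ∑' i, |stmt8g i x - stmt8g i y| := key
      _ = ∑ i ∈ Finset.range N, |stmt8g i x - stmt8g i y|
          + ∑' i : ℕ, |stmt8g (i+N) x - stmt8g (i+N) y| := hsplit.symm
      _ ≤ 4 * d * t⁻¹ + 2 * t := add_le_add hhead htail
  have hdt : d ≤ 4 * t^2 := by nlinarith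
  have hfinal : 4 * d * t⁻¹ + 2 * t ≤ 18 * s := by
    have h1 : 4 * d * t⁻¹ ≤ 16 * t := by
      have h2 : 4 * d ≤ 16 * t * t := by nlinarith
      calc 4 * d * t⁻¹ ≤ (16 * t * t) * t⁻¹ :=
            mul_le_mul_of_nonneg_right h2 (by positivity)
        _ = 16 * t := by field_simp
    linarith [hts]
  rw [← Real.sqrt_eq_rpow]
  calc |f x - f y| ≤ 4 * d * t⁻¹ + 2 * t := hbound
    _ ≤ 18 * s := hfinal
    _ = 18 * Real.sqrt d := by rw [hs]
end

section
/- Let I = [a, a + 2^(−N)] ⊆ [0,1] and let g : [0,1] → ℝ be zero outside I, equal to (3/2)·2^(−N) at the midpoint of I, and linear on each half of I. Then g is continuous, 0 ≤ g(x) ≤ (3/2)·2^(−N) for all x, and every modulus of continuity μ of g satisfies μ(N) > N. -/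
theorem stmt_19 (N : ℕ) (a : ℝ) (ha : 0 ≤ a) (ha' : a + (2:ℝ)^(-(N:ℤ)) ≤ 1)
    (g : ℝ → ℝ)
    (hg : ∀ x, g x = (3/2) * (2:ℝ)^(-(N:ℤ)) *
      max (1 - |x - (a + (2:ℝ)^(-(N:ℤ)-1))| / (2:ℝ)^(-(N:ℤ)-1)) 0) :
    Continuous g ∧
    (∀ x, 0 ≤ g x ∧ g x ≤ (3/2) * (2:ℝ)^(-(N:ℤ))) ∧
    ∀ μ : ℕ → ℕ,
      (∀ x ∈ Set.Icc (0:ℝ) 1, ∀ y ∈ Set.Icc (0:ℝ) 1, ∀ n : ℕ,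
        |x - y| ≤ (2:ℝ)^(-(μ n : ℤ)) → |g x - g y| ≤ (2:ℝ)^(-(n:ℤ))) →
      μ N > N := by
  have hpos : (0:ℝ) < (2:ℝ)^(-(N:ℤ)) := by positivity
  have hpos' : (0:ℝ) < (2:ℝ)^(-(N:ℤ)-1) := by positivity
  have hfun : g = fun x => (3/2) * (2:ℝ)^(-(N:ℤ)) *
      max (1 - |x - (a + (2:ℝ)^(-(N:ℤ)-1))| / (2:ℝ)^(-(N:ℤ)-1)) 0 := funext hg
  refine ⟨?_, ?_, ?_⟩
  · rw [hfun]; fun_prop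
  · intro x
    rw [hg x]
    constructor
    · positivity
    · have h1 : max (1 - |x - (a + (2:ℝ)^(-(N:ℤ)-1))| / (2:ℝ)^(-(N:ℤ)-1)) 0 ≤ 1 := by
        apply max_le _ zero_le_one
        have : 0 ≤ |x - (a + (2:ℝ)^(-(N:ℤ)-1))| / (2:ℝ)^(-(N:ℤ)-1) := by positivity
        linarith
      nlinarith
  · intro μ hμ
    by_contra h
    push_neg at h
    have hμN : (2:ℝ)^(-(N:ℤ)) ≤ (2:ℝ)^(-(μ N : ℤ)) :=
      zpow_le_zpow_right₀ one_le_two (by omega)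
    have hm : (2:ℝ)^(-(N:ℤ)-1) ≤ (2:ℝ)^(-(N:ℤ)) :=
      zpow_le_zpow_right₀ one_le_two (by omega)
    set m := a + (2:ℝ)^(-(N:ℤ)-1) with hmdef
    have hma : |a - m| = (2:ℝ)^(-(N:ℤ)-1) := by
      rw [hmdef]; rw [abs_of_nonpos] <;> [ring; linarith]
    have ha1 : a ∈ Set.Icc (0:ℝ) 1 := ⟨ha, by linarith⟩
    have hm1 : m ∈ Set.Icc (0:ℝ) 1 := ⟨by positivity, by linarith⟩
    have key := hμ a ha1 m hm1 N (by
      rw [hma]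
      calc (2:ℝ)^(-(N:ℤ)-1) ≤ (2:ℝ)^(-(N:ℤ)) := hm
        _ ≤ _ := hμN)
    have hga : g a = 0 := by
      rw [hg a]
      have : |a - m| / (2:ℝ)^(-(N:ℤ)-1) = 1 := by rw [hma]; field_simp
      rw [this]; simp
    have hgm : g m = (3/2) * (2:ℝ)^(-(N:ℤ)) := by
      rw [hg m]; simp
    rw [hga, hgm] at key
    rw [abs_of_nonpos (by linarith)] at key
    linarith
end
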